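/- Let G = (V,E) be a finite cavity-monotone network. Then for every t > 0, the energy satisfies U(G;t) ≤ t · Σ_{ij∈E} A(μ_i)A(μ_j), where for a local measure μ, A(μ) = max μ / min μ with max μ = max{μ(F) : μ(F) > 0} and min μ = min{μ(F) : μ(F) > 0}. -/

import Mathlib

open Finset Filter
open scoped Classical ENNReal

section LocalDefs

variable {V : Type*} [DecidableEq V]

/-- Generating polynomial `Z(w) = Σ_{S ⊆ A} ν(S) ∏_{k∈S} w_k` of a measure `ν`
on the subsets of the ground set `A`. -/
noncomputable def lZ (A : Finset V) (ν : Finset V → ℝ) (w : V → ℝ) : ℝ :=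
  ∑ S ∈ A.powerset, ν S * ∏ k ∈ S, w k

/-- Gibbs--Boltzmann probability of the event `p` under external field `w`. -/
noncomputable def lProb (A : Finset V) (ν : Finset V → ℝ) (w : V → ℝ)
    (p : Finset V → Prop) : ℝ :=
  (∑ S ∈ A.powerset.filter p, ν S * ∏ k ∈ S, w k) / lZ A ν w

/-- The energy `U_ν(w)`, i.e. the expected cardinality of the random subset. -/
noncomputable def lEnergy (A : Finset V) (ν : Finset V → ℝ) (w : V → ℝ) : ℝ :=
  (∑ S ∈ A.powerset, (S.card : ℝ) * ν S * ∏ k ∈ S, w k) / lZ A ν w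

/-- `E^w_ν[|𝓕|·1_{e∈𝓕}]`. -/
noncomputable def lEnergyIn (A : Finset V) (ν : Finset V → ℝ) (e : V) (w : V → ℝ) : ℝ :=
  (∑ S ∈ A.powerset.filter (fun S => e ∈ S), (S.card : ℝ) * ν S * ∏ k ∈ S, w k) / lZ A ν w

/-- The cavity ratio `Γ^e_ν(w') = Z^{/e}(w') / Z^{∖e}(w')`; it only depends on the
coordinates of `w` different from `e`. -/
noncomputable def lGamma (A : Finset V) (ν : Finset V → ℝ) (e : V) (w : V → ℝ) : ℝ :=
  (∑ S ∈ (A.erase e).powerset, ν (insert e S) * ∏ k ∈ S, w k) /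
  (∑ S ∈ (A.erase e).powerset, ν S * ∏ k ∈ S, w k)

/-- Rayleigh property: pairwise negative correlation under every positive external field. -/
def lRayleigh (A : Finset V) (ν : Finset V → ℝ) : Prop :=
  ∀ w : V → ℝ, (∀ k ∈ A, 0 < w k) → ∀ e ∈ A, ∀ f ∈ A, e ≠ f →
    lProb A ν w (fun S => e ∈ S ∧ f ∈ S) ≤
      lProb A ν w (fun S => e ∈ S) * lProb A ν w (fun S => f ∈ S)

/-- Size-increasing property: every ground element positively influences the total size. -/
def lSizeInc (A : Finset V) (ν : Finset V → ℝ) : Prop :=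
  ∀ w : V → ℝ, (∀ k ∈ A, 0 < w k) → ∀ e ∈ A,
    lEnergy A ν w * lProb A ν w (fun S => e ∈ S) < lEnergyIn A ν e w

/-- Cavity-monotone: nonnegative, `ν(∅) > 0`, Rayleigh and size-increasing. -/
def lCavityMonotone (A : Finset V) (ν : Finset V → ℝ) : Prop :=
  (∀ S ∈ A.powerset, 0 ≤ ν S) ∧ 0 < ν ∅ ∧ lRayleigh A ν ∧ lSizeInc A ν

end LocalDefs

section NetworkDefs

variable {V : Type*} [DecidableEq V]

/-- The cavity operator: `(Γ_G x)_{i→j}` is the cavity ratio of the local measure `μ i`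
at the edge `ij`, with external field `(x_{k→i} : k ∈ ∂i ∖ {j})`.  Local measures are
encoded as functions of the set of neighbours selected. -/
noncomputable def cavOp (G : SimpleGraph V) [G.LocallyFinite]
    (μ : V → Finset V → ℝ) (x : V → V → ℝ) (i j : V) : ℝ :=
  (∑ S ∈ ((G.neighborFinset i).erase j).powerset, μ i (insert j S) * ∏ k ∈ S, x k i) /
  (∑ S ∈ ((G.neighborFinset i).erase j).powerset, μ i S * ∏ k ∈ S, x k i)

/-- One step of the cavity iteration at activity `t` : `x ↦ t Γ_G(x)`. -/
noncomputable def cavStep (G : SimpleGraph V) [G.LocallyFinite]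
    (μ : V → Finset V → ℝ) (t : ℝ) (x : V → V → ℝ) : V → V → ℝ :=
  fun i j => t * cavOp G μ x i j

/-- The neighbours `k` of `i` such that the edge `ik` belongs to the spanning subgraph `F`;
this encodes `F ∩ E_i` as a set of neighbours. -/
noncomputable def nbrsIn (G : SimpleGraph V) [G.LocallyFinite]
    (F : Finset (Sym2 V)) (i : V) : Finset V :=
  (G.neighborFinset i).filter (fun k => s(i, k) ∈ F)

variable [Fintype V]

/-- Global measure `μ(F) = ∏_i μ_i(F ∩ E_i)` of a spanning subgraph `F`. -/
noncomputable def gWeight (G : SimpleGraph V) [DecidableRel G.Adj]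
    (μ : V → Finset V → ℝ) (F : Finset (Sym2 V)) : ℝ :=
  ∏ i : V, μ i (nbrsIn G F i)

/-- Partition function `Z(G;t) = Σ_{F ⊆ E} μ(F) t^{|F|}`. -/
noncomputable def ZG (G : SimpleGraph V) [DecidableRel G.Adj]
    (μ : V → Finset V → ℝ) (t : ℝ) : ℝ :=
  ∑ F ∈ G.edgeFinset.powerset, gWeight G μ F * t ^ F.card

/-- Gibbs--Boltzmann probability of the event `p` at activity `t`. -/
noncomputable def gProb (G : SimpleGraph V) [DecidableRel G.Adj]
    (μ : V → Finset V → ℝ) (t : ℝ) (p : Finset (Sym2 V) → Prop) : ℝ :=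
  (∑ F ∈ G.edgeFinset.powerset.filter p, gWeight G μ F * t ^ F.card) / ZG G μ t

/-- Energy `U(G;t)`, the expected size of the random spanning subgraph. -/
noncomputable def UG (G : SimpleGraph V) [DecidableRel G.Adj]
    (μ : V → Finset V → ℝ) (t : ℝ) : ℝ :=
  (∑ F ∈ G.edgeFinset.powerset, (F.card : ℝ) * gWeight G μ F * t ^ F.card) / ZG G μ t

/-- `M(G)`, the maximum size of a spanning subgraph with positive weight. -/
noncomputable def MG (G : SimpleGraph V) [DecidableRel G.Adj]
    (μ : V → Finset V → ℝ) : ℕ :=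
  (G.edgeFinset.powerset.filter (fun F => 0 < gWeight G μ F)).sup Finset.card

end NetworkDefs

/-- `A(ν) = max ν / min ν`, the ratio of the largest to the smallest positive value of
the local measure `ν` on subsets of the ground set `A`. -/
noncomputable def AM {V : Type*} [DecidableEq V] (A : Finset V) (ν : Finset V → ℝ) : ℝ :=
  sSup (ν '' {S : Finset V | S ⊆ A ∧ 0 < ν S}) /
    sInf (ν '' {S : Finset V | S ⊆ A ∧ 0 < ν S})

section Aux1
variable {V : Type*} [DecidableEq V]

lemma lZ_pos {A : Finset V} {ν : Finset V → ℝ} (hnn : ∀ S ∈ A.powerset, 0 ≤ ν S)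
    (h0 : 0 < ν ∅) {w : V → ℝ} (hw : ∀ k ∈ A, 0 < w k) : 0 < lZ A ν w := by
  have hle : ν ∅ * ∏ k ∈ (∅ : Finset V), w k ≤ lZ A ν w := by
    rw [lZ]
    exact Finset.single_le_sum (f := fun S => ν S * ∏ k ∈ S, w k)
      (fun S hS => mul_nonneg (hnn S hS)
        (Finset.prod_nonneg fun k hk => (hw k (Finset.mem_powerset.mp hS hk)).le))
      (by simp)
  have hpos : (0:ℝ) < ν ∅ * ∏ k ∈ (∅ : Finset V), w k := by simpa using h0
  linarith

lemma filter_ext {α : Type*} {p q : α → Prop} {dp : DecidablePred p} {dq : DecidablePred q}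
    {s : Finset α} (h : ∀ x ∈ s, p x ↔ q x) :
    @Finset.filter α p dp s = @Finset.filter α q dq s := by
  ext x
  rw [Finset.mem_filter, Finset.mem_filter]
  exact ⟨fun hx => ⟨hx.1, (h x hx.1).1 hx.2⟩, fun hx => ⟨hx.1, (h x hx.1).2 hx.2⟩⟩

/-- numerator sum of the Gibbs measure restricted to event `p`. -/
noncomputable def pS (A : Finset V) (ν : Finset V → ℝ) (w : V → ℝ)
    (p : Finset V → Prop) : ℝ :=
  ∑ S ∈ A.powerset.filter p, ν S * ∏ k ∈ S, w k

/-- plain coefficient sum over an event. -/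
noncomputable def cS (A : Finset V) (ν : Finset V → ℝ) (p : Finset V → Prop) : ℝ :=
  ∑ S ∈ A.powerset.filter p, ν S

/-- normalized sum with integer exponents. -/
noncomputable def gS (A : Finset V) (ν : Finset V → ℝ) (z : Finset V → ℤ)
    (p : Finset V → Prop) (R : ℝ) : ℝ :=
  ∑ S ∈ A.powerset.filter p, ν S * R ^ (z S)

lemma lProb_eq_pS (A : Finset V) (ν : Finset V → ℝ) (w : V → ℝ) (p : Finset V → Prop) :
    lProb A ν w p = pS A ν w p / lZ A ν w := rfl

lemma pS_congr (A : Finset V) (ν : Finset V → ℝ) (w : V → ℝ) {p q : Finset V → Prop}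
    (h : ∀ S ∈ A.powerset, p S ↔ q S) : pS A ν w p = pS A ν w q := by
  unfold pS
  refine Finset.sum_congr ?_ fun _ _ => rfl
  exact filter_ext h

lemma cS_congr (A : Finset V) (ν : Finset V → ℝ) {p q : Finset V → Prop}
    (h : ∀ S ∈ A.powerset, p S ↔ q S) : cS A ν p = cS A ν q := by
  unfold cS
  refine Finset.sum_congr ?_ fun _ _ => rfl
  exact filter_ext h

lemma pS_split (A : Finset V) (ν : Finset V → ℝ) (w : V → ℝ) (p q : Finset V → Prop) :
    pS A ν w p = pS A ν w (fun S => p S ∧ q S) + pS A ν w (fun S => p S ∧ ¬ q S) := by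
  unfold pS
  rw [← Finset.sum_filter_add_sum_filter_not (A.powerset.filter p) q]
  congr 1 <;>
  · refine Finset.sum_congr ?_ fun _ _ => rfl
    rw [Finset.filter_filter]
    exact filter_ext fun S _ => Iff.rfl

lemma lZ_split (A : Finset V) (ν : Finset V → ℝ) (w : V → ℝ) (p : Finset V → Prop) :
    lZ A ν w = pS A ν w p + pS A ν w (fun S => ¬ p S) := by
  unfold lZ pS
  rw [← Finset.sum_filter_add_sum_filter_not A.powerset p]
  congr 1 <;>
  · refine Finset.sum_congr ?_ fun _ _ => rfl
    exact filter_ext fun S _ => Iff.rfl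

lemma rayleigh4 {A : Finset V} {ν : Finset V → ℝ} (hnn : ∀ S ∈ A.powerset, 0 ≤ ν S)
    (h0 : 0 < ν ∅) (hray : lRayleigh A ν) {w : V → ℝ} (hw : ∀ k ∈ A, 0 < w k)
    {e f : V} (he : e ∈ A) (hf : f ∈ A) (hef : e ≠ f) :
    pS A ν w (fun S => e ∈ S ∧ f ∈ S) * pS A ν w (fun S => ¬ e ∈ S ∧ ¬ f ∈ S) ≤
    pS A ν w (fun S => e ∈ S ∧ ¬ f ∈ S) * pS A ν w (fun S => ¬ e ∈ S ∧ f ∈ S) := by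
  have hZ : 0 < lZ A ν w := lZ_pos hnn h0 hw
  have hP := hray w hw e he f hf hef
  rw [lProb_eq_pS, lProb_eq_pS, lProb_eq_pS] at hP
  set a := pS A ν w (fun S => e ∈ S ∧ f ∈ S) with ha
  set c := pS A ν w (fun S => e ∈ S ∧ ¬ f ∈ S) with hc
  set d := pS A ν w (fun S => ¬ e ∈ S ∧ f ∈ S) with hd
  set b := pS A ν w (fun S => ¬ e ∈ S ∧ ¬ f ∈ S) with hb
  have hsume : pS A ν w (fun S => e ∈ S) = a + c := pS_split A ν w _ (fun S => f ∈ S)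
  have hsumf : pS A ν w (fun S => f ∈ S) = a + d := by
    rw [pS_split A ν w (fun S => f ∈ S) (fun S => e ∈ S), ha, hd]
    congr 1
    · exact pS_congr A ν w fun S _ => by tauto
    · exact pS_congr A ν w fun S _ => by tauto
  have hZdec : lZ A ν w = a + c + (d + b) := by
    rw [lZ_split A ν w (fun S => e ∈ S), hsume, pS_split A ν w (fun S => ¬ e ∈ S) (fun S => f ∈ S)]
  rw [hsume, hsumf, div_mul_div_comm, div_le_div_iff₀ hZ (by positivity)] at hP
  have haZ : a * lZ A ν w ≤ (a + c) * (a + d) := by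
    have h3 : a * lZ A ν w * lZ A ν w ≤ (a + c) * (a + d) * lZ A ν w := by
      calc a * lZ A ν w * lZ A ν w = a * (lZ A ν w * lZ A ν w) := by ring
        _ ≤ (a + c) * (a + d) * lZ A ν w := hP
    exact (mul_le_mul_iff_left₀ hZ).mp h3
  rw [hZdec] at haZ
  nlinarith [haZ]

end Aux1
section Aux2
variable {V : Type*} [DecidableEq V]

/-- The field sending `B`-coordinates to `R`, `O`-coordinates to `R⁻¹`, rest to 1. -/
noncomputable def wR (B O : Finset V) (R : ℝ) : V → ℝ :=
  fun k => if k ∈ B then R else if k ∈ O then R⁻¹ else 1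

/-- The normalizing exponent. -/
def zE (B O : Finset V) (S : Finset V) : ℤ :=
  ((S ∩ B).card : ℤ) - ((S ∩ O).card : ℤ) - (B.card : ℤ)

lemma wR_pos {B O : Finset V} {R : ℝ} (hR : 0 < R) (k : V) : 0 < wR B O R k := by
  unfold wR; split_ifs <;> positivity

lemma prod_wR {B O : Finset V} (hBO : Disjoint B O) {R : ℝ} (hR : 0 < R) (S : Finset V) :
    ∏ k ∈ S, wR B O R k = R ^ (((S ∩ B).card : ℤ) - ((S ∩ O).card : ℤ)) := by
  have hR0 : R ≠ 0 := hR.ne'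
  rw [← Finset.prod_filter_mul_prod_filter_not S (· ∈ B) (wR B O R),
    ← Finset.prod_filter_mul_prod_filter_not (S.filter (· ∉ B)) (· ∈ O) (wR B O R)]
  have e1 : ∏ k ∈ S.filter (· ∈ B), wR B O R k = R ^ (S ∩ B).card := by
    calc ∏ k ∈ S.filter (· ∈ B), wR B O R k = ∏ _k ∈ S.filter (· ∈ B), R :=
          Finset.prod_congr rfl (fun k hk => by simp [wR, (Finset.mem_filter.mp hk).2])
      _ = R ^ (S ∩ B).card := by rw [Finset.prod_const, Finset.filter_mem_eq_inter]
  have h21 : (S.filter (· ∉ B)).filter (· ∈ O) = S ∩ O := by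
    rw [Finset.filter_filter, ← Finset.filter_mem_eq_inter]
    exact filter_ext fun x _ =>
      ⟨fun h => h.2, fun h => ⟨fun hB => (Finset.disjoint_left.mp hBO hB) h, h⟩⟩
  have e2 : ∏ k ∈ (S.filter (· ∉ B)).filter (· ∈ O), wR B O R k = R⁻¹ ^ (S ∩ O).card := by
    calc ∏ k ∈ (S.filter (· ∉ B)).filter (· ∈ O), wR B O R k
        = ∏ _k ∈ (S.filter (· ∉ B)).filter (· ∈ O), R⁻¹ := by
          refine Finset.prod_congr rfl (fun k hk => ?_)
          have hO : k ∈ O := (Finset.mem_filter.mp hk).2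
          have hB : k ∉ B := (Finset.mem_filter.mp (Finset.mem_filter.mp hk).1).2
          simp [wR, hO, hB]
      _ = R⁻¹ ^ (S ∩ O).card := by rw [Finset.prod_const, h21]
  have e3 : ∏ k ∈ (S.filter (· ∉ B)).filter (· ∉ O), wR B O R k = 1 := by
    refine Finset.prod_eq_one fun k hk => ?_
    have hO : k ∉ O := (Finset.mem_filter.mp hk).2
    have hB : k ∉ B := (Finset.mem_filter.mp (Finset.mem_filter.mp hk).1).2
    simp [wR, hO, hB]
  rw [e1, e2, e3, mul_one, inv_pow, zpow_sub₀ hR0, zpow_natCast, zpow_natCast,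
    div_eq_mul_inv]

lemma pS_eq_gS {A : Finset V} {ν : Finset V → ℝ} {B O : Finset V} (hBO : Disjoint B O)
    {R : ℝ} (hR : 0 < R) (p : Finset V → Prop) :
    pS A ν (wR B O R) p = R ^ (B.card : ℤ) * gS A ν (zE B O) p R := by
  unfold pS gS
  rw [Finset.mul_sum]
  refine Finset.sum_congr rfl fun S _ => ?_
  have hsplit : R ^ (((S ∩ B).card : ℤ) - ((S ∩ O).card : ℤ))
      = R ^ (zE B O S) * R ^ ((B.card : ℤ)) := by
    rw [← zpow_add₀ hR.ne']
    congr 1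
    rw [zE]
    ring
  rw [prod_wR hBO hR S, hsplit]
  ring

lemma zE_nonpos {B O : Finset V} (S : Finset V) : zE B O S ≤ 0 := by
  have h1 : (S ∩ B).card ≤ B.card := Finset.card_le_card Finset.inter_subset_right
  have : (0:ℤ) ≤ ((S ∩ O).card : ℤ) := Int.natCast_nonneg _
  unfold zE; omega

lemma zE_eq_zero_iff {A B C : Finset V} (hB : B ⊆ A) {S : Finset V} (hS : S ⊆ A) :
    zE B (A \ (B ∪ C)) S = 0 ↔ B ⊆ S ∧ S ⊆ B ∪ C := by
  set O := A \ (B ∪ C) with hO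
  have h1 : (S ∩ B).card ≤ B.card := Finset.card_le_card Finset.inter_subset_right
  constructor
  · intro hz
    have h2 : (S ∩ B).card = B.card ∧ (S ∩ O).card = 0 := by unfold zE at hz; omega
    have h3 : S ∩ B = B := Finset.eq_of_subset_of_card_le Finset.inter_subset_right h2.1.ge
    have h4 : S ∩ O = ∅ := Finset.card_eq_zero.mp h2.2
    constructor
    · intro x hx
      rw [← h3] at hx
      exact (Finset.mem_inter.mp hx).1
    · intro x hx
      by_contra hnx
      have hxO : x ∈ O := by
        rw [hO, Finset.mem_sdiff]
        exact ⟨hS hx, hnx⟩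
      have : x ∈ S ∩ O := Finset.mem_inter.mpr ⟨hx, hxO⟩
      rw [h4] at this
      exact absurd this (Finset.notMem_empty x)
  · rintro ⟨hBS, hSBC⟩
    have h3 : S ∩ B = B := Finset.inter_eq_right.mpr hBS
    have h4 : S ∩ O = ∅ := by
      rw [Finset.eq_empty_iff_forall_notMem]
      intro x hx
      rcases Finset.mem_inter.mp hx with ⟨hxS, hxO⟩
      rw [hO, Finset.mem_sdiff] at hxO
      exact hxO.2 (hSBC hxS)
    rw [zE, h3, h4]
    simp

lemma gS_tendsto (A : Finset V) (ν : Finset V → ℝ) (B C : Finset V) (hB : B ⊆ A)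
    (p : Finset V → Prop) :
    Filter.Tendsto (gS A ν (zE B (A \ (B ∪ C))) p) Filter.atTop
      (nhds (cS A ν (fun S => p S ∧ B ⊆ S ∧ S ⊆ B ∪ C))) := by
  set O := A \ (B ∪ C) with hO
  have key : cS A ν (fun S => p S ∧ B ⊆ S ∧ S ⊆ B ∪ C)
      = ∑ S ∈ A.powerset.filter p, (if zE B O S = 0 then ν S else 0) := by
    rw [← Finset.sum_filter (fun S => zE B O S = 0) ν, cS]
    refine Finset.sum_congr ?_ fun _ _ => rfl
    rw [Finset.filter_filter]
    refine filter_ext fun S hS => ?_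
    have hSA : S ⊆ A := Finset.mem_powerset.mp hS
    rw [zE_eq_zero_iff hB hSA]
  rw [key]
  refine tendsto_finset_sum _ fun S hS => ?_
  by_cases hz : zE B O S = 0
  · rw [if_pos hz]
    have : (fun R : ℝ => ν S * R ^ (zE B O S)) = fun _ : ℝ => ν S := by
      funext R; rw [hz]; simp
    rw [this]
    exact tendsto_const_nhds
  · rw [if_neg hz]
    have hneg : zE B O S < 0 := lt_of_le_of_ne (zE_nonpos S) hz
    have := (tendsto_zpow_atTop_zero (𝕜 := ℝ) hneg).const_mul (ν S)
    simpa using this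

lemma coeffIneq {A : Finset V} {ν : Finset V → ℝ} (hnn : ∀ S ∈ A.powerset, 0 ≤ ν S)
    (h0 : 0 < ν ∅) (hray : lRayleigh A ν) {B C : Finset V} (hB : B ⊆ A) (hC : C ⊆ A)
    (hBC : Disjoint B C) {e f : V} (heC : e ∈ C) (hfC : f ∈ C) (hef : e ≠ f) :
    cS A ν (fun S => (e ∈ S ∧ f ∈ S) ∧ B ⊆ S ∧ S ⊆ B ∪ C) *
      cS A ν (fun S => (¬ e ∈ S ∧ ¬ f ∈ S) ∧ B ⊆ S ∧ S ⊆ B ∪ C) ≤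
    cS A ν (fun S => (e ∈ S ∧ ¬ f ∈ S) ∧ B ⊆ S ∧ S ⊆ B ∪ C) *
      cS A ν (fun S => (¬ e ∈ S ∧ f ∈ S) ∧ B ⊆ S ∧ S ⊆ B ∪ C) := by
  set O := A \ (B ∪ C) with hO
  have hBO : Disjoint B O := by
    rw [Finset.disjoint_left]
    intro x hxB hxO
    rw [hO, Finset.mem_sdiff] at hxO
    exact hxO.2 (Finset.mem_union_left _ hxB)
  set z := zE B O with hz
  set g := gS A ν z with hg
  have hG : ∀ R : ℝ, 0 < R →
      g (fun S => e ∈ S ∧ f ∈ S) R * g (fun S => ¬ e ∈ S ∧ ¬ f ∈ S) R ≤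
      g (fun S => e ∈ S ∧ ¬ f ∈ S) R * g (fun S => ¬ e ∈ S ∧ f ∈ S) R := by
    intro R hR
    have h4 := rayleigh4 hnn h0 hray (w := wR B O R) (fun k _ => wR_pos hR k)
      (hC heC) (hC hfC) hef
    rw [pS_eq_gS hBO hR, pS_eq_gS hBO hR, pS_eq_gS hBO hR, pS_eq_gS hBO hR] at h4
    have hRb : (0:ℝ) < R ^ (B.card : ℤ) := zpow_pos hR _
    have h5 : (R ^ (B.card : ℤ) * R ^ (B.card : ℤ)) *
        (g (fun S => e ∈ S ∧ f ∈ S) R * g (fun S => ¬ e ∈ S ∧ ¬ f ∈ S) R) ≤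
        (R ^ (B.card : ℤ) * R ^ (B.card : ℤ)) *
        (g (fun S => e ∈ S ∧ ¬ f ∈ S) R * g (fun S => ¬ e ∈ S ∧ f ∈ S) R) := by
      calc (R ^ (B.card : ℤ) * R ^ (B.card : ℤ)) *
          (g (fun S => e ∈ S ∧ f ∈ S) R * g (fun S => ¬ e ∈ S ∧ ¬ f ∈ S) R)
          = (R ^ (B.card : ℤ) * g (fun S => e ∈ S ∧ f ∈ S) R) *
            (R ^ (B.card : ℤ) * g (fun S => ¬ e ∈ S ∧ ¬ f ∈ S) R) := by ring
        _ ≤ (R ^ (B.card : ℤ) * g (fun S => e ∈ S ∧ ¬ f ∈ S) R) *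
            (R ^ (B.card : ℤ) * g (fun S => ¬ e ∈ S ∧ f ∈ S) R) := h4
        _ = (R ^ (B.card : ℤ) * R ^ (B.card : ℤ)) *
            (g (fun S => e ∈ S ∧ ¬ f ∈ S) R * g (fun S => ¬ e ∈ S ∧ f ∈ S) R) := by ring
    exact (mul_le_mul_iff_right₀ (by positivity)).mp h5
  have t1 := gS_tendsto A ν B C hB (fun S => e ∈ S ∧ f ∈ S)
  have t2 := gS_tendsto A ν B C hB (fun S => ¬ e ∈ S ∧ ¬ f ∈ S)
  have t3 := gS_tendsto A ν B C hB (fun S => e ∈ S ∧ ¬ f ∈ S)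
  have t4 := gS_tendsto A ν B C hB (fun S => ¬ e ∈ S ∧ f ∈ S)
  refine le_of_tendsto_of_tendsto (t1.mul t2) (t3.mul t4) ?_
  filter_upwards [Filter.eventually_gt_atTop 0] with R hR
  exact hG R hR

end Aux2
section Aux3
variable {V : Type*} [DecidableEq V]

lemma cS_eq_single {A : Finset V} {ν : Finset V → ℝ} {p : Finset V → Prop} (S₀ : Finset V)
    (hmem : S₀ ∈ A.powerset) (hp : p S₀)
    (hzero : ∀ X ∈ A.powerset, p X → X ≠ S₀ → ν X = 0) : cS A ν p = ν S₀ := by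
  unfold cS
  refine Finset.sum_eq_single_of_mem S₀ (Finset.mem_filter.mpr ⟨hmem, hp⟩) fun X hX hne => ?_
  exact hzero X (Finset.mem_filter.mp hX).1 (Finset.mem_filter.mp hX).2 hne

lemma cS_eq_zero {A : Finset V} {ν : Finset V → ℝ} {p : Finset V → Prop}
    (hzero : ∀ X ∈ A.powerset, p X → ν X = 0) : cS A ν p = 0 := by
  unfold cS
  exact Finset.sum_eq_zero fun X hX =>
    hzero X (Finset.mem_filter.mp hX).1 (Finset.mem_filter.mp hX).2

/-- coefficient form of the Rayleigh inequality : the `(†)` exchange inequality. -/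
lemma dagger {A : Finset V} {ν : Finset V → ℝ} (hnn : ∀ S ∈ A.powerset, 0 ≤ ν S)
    (h0 : 0 < ν ∅) (hray : lRayleigh A ν) {T : Finset V} {e f : V}
    (hT : insert e (insert f T) ⊆ A) (he : e ∉ T) (hf : f ∉ T) (hef : e ≠ f) :
    ν (insert e (insert f T)) * ν T ≤ ν (insert e T) * ν (insert f T) := by
  have heA : e ∈ A := hT (Finset.mem_insert_self _ _)
  have hfA : f ∈ A := hT (Finset.mem_insert_of_mem (Finset.mem_insert_self _ _))
  have hTA : T ⊆ A := fun x hx =>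
    hT (Finset.mem_insert_of_mem (Finset.mem_insert_of_mem hx))
  have hCA : ({e, f} : Finset V) ⊆ A := by
    intro x hx
    rcases Finset.mem_insert.mp hx with rfl | hx
    · exact heA
    · rw [Finset.mem_singleton] at hx; subst hx; exact hfA
  have hBC : Disjoint T ({e, f} : Finset V) := by
    rw [Finset.disjoint_right]
    intro x hx
    rcases Finset.mem_insert.mp hx with rfl | hx
    · exact he
    · rw [Finset.mem_singleton] at hx; subst hx; exact hf
  have hunion : T ∪ ({e, f} : Finset V) = insert e (insert f T) := by
    ext x
    simp only [Finset.mem_union, Finset.mem_insert, Finset.mem_singleton]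
    tauto
  have key := coeffIneq hnn h0 hray hTA hCA hBC (Finset.mem_insert_self e {f})
    (Finset.mem_insert_of_mem (Finset.mem_singleton_self f)) hef
  have hW1 : cS A ν (fun S => (e ∈ S ∧ f ∈ S) ∧ T ⊆ S ∧ S ⊆ T ∪ {e, f})
      = ν (insert e (insert f T)) := by
    refine cS_eq_single _ (Finset.mem_powerset.mpr hT) ?_ ?_
    · refine ⟨⟨Finset.mem_insert_self _ _,
        Finset.mem_insert_of_mem (Finset.mem_insert_self _ _)⟩, ?_, ?_⟩
      · intro x hx; exact Finset.mem_insert_of_mem (Finset.mem_insert_of_mem hx)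
      · rw [hunion]
    · rintro X hX ⟨⟨heX, hfX⟩, hTX, hXU⟩ hne
      exfalso; apply hne
      refine Finset.Subset.antisymm (hunion ▸ hXU) ?_
      exact Finset.insert_subset heX (Finset.insert_subset hfX hTX)
  have hW2 : cS A ν (fun S => (¬ e ∈ S ∧ ¬ f ∈ S) ∧ T ⊆ S ∧ S ⊆ T ∪ {e, f}) = ν T := by
    refine cS_eq_single _ (Finset.mem_powerset.mpr hTA) ⟨⟨he, hf⟩, le_refl _, Finset.subset_union_left⟩ ?_
    rintro X hX ⟨⟨heX, hfX⟩, hTX, hXU⟩ hne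
    exfalso; apply hne
    refine Finset.Subset.antisymm ?_ hTX
    intro x hx
    rcases Finset.mem_union.mp (hXU hx) with h | h
    · exact h
    · exfalso
      rcases Finset.mem_insert.mp h with rfl | h
      · exact heX hx
      · rw [Finset.mem_singleton] at h; subst h; exact hfX hx
  have hW3 : cS A ν (fun S => (e ∈ S ∧ ¬ f ∈ S) ∧ T ⊆ S ∧ S ⊆ T ∪ {e, f})
      = ν (insert e T) := by
    refine cS_eq_single _ (Finset.mem_powerset.mpr (Finset.insert_subset heA hTA)) ?_ ?_
    · refine ⟨⟨Finset.mem_insert_self _ _, ?_⟩, Finset.subset_insert _ _, ?_⟩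
      · intro hc
        rcases Finset.mem_insert.mp hc with h | h
        · exact hef h.symm
        · exact hf h
      · intro x hx
        rcases Finset.mem_insert.mp hx with rfl | h
        · exact Finset.mem_union_right _ (Finset.mem_insert_self _ _)
        · exact Finset.mem_union_left _ h
    · rintro X hX ⟨⟨heX, hfX⟩, hTX, hXU⟩ hne
      exfalso; apply hne
      refine Finset.Subset.antisymm ?_ (Finset.insert_subset heX hTX)
      intro x hx
      rcases Finset.mem_union.mp (hXU hx) with h | h
      · exact Finset.mem_insert_of_mem h
      · rcases Finset.mem_insert.mp h with rfl | h
        · exact Finset.mem_insert_self _ _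
        · rw [Finset.mem_singleton] at h; subst h; exact absurd hx hfX
  have hW4 : cS A ν (fun S => (¬ e ∈ S ∧ f ∈ S) ∧ T ⊆ S ∧ S ⊆ T ∪ {e, f})
      = ν (insert f T) := by
    refine cS_eq_single _ (Finset.mem_powerset.mpr (Finset.insert_subset hfA hTA)) ?_ ?_
    · refine ⟨⟨?_, Finset.mem_insert_self _ _⟩, Finset.subset_insert _ _, ?_⟩
      · intro hc
        rcases Finset.mem_insert.mp hc with h | h
        · exact hef h
        · exact he h
      · intro x hx
        rcases Finset.mem_insert.mp hx with rfl | h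
        · exact Finset.mem_union_right _ (Finset.mem_insert_of_mem (Finset.mem_singleton_self _))
        · exact Finset.mem_union_left _ h
    · rintro X hX ⟨⟨heX, hfX⟩, hTX, hXU⟩ hne
      exfalso; apply hne
      refine Finset.Subset.antisymm ?_ (Finset.insert_subset hfX hTX)
      intro x hx
      rcases Finset.mem_union.mp (hXU hx) with h | h
      · exact Finset.mem_insert_of_mem h
      · rcases Finset.mem_insert.mp h with rfl | h
        · exact absurd hx heX
        · rw [Finset.mem_singleton] at h; subst h; exact Finset.mem_insert_self _ _
  rw [hW1, hW2, hW3, hW4] at key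
  exact key

/-- there is no gap of size ≥ 2 between nested support sets. -/
lemma noGap {A : Finset V} {ν : Finset V → ℝ} (hnn : ∀ S ∈ A.powerset, 0 ≤ ν S)
    (h0 : 0 < ν ∅) (hray : lRayleigh A ν) {U S : Finset V} (hUS : U ⊆ S) (hSA : S ⊆ A)
    (hU : 0 < ν U) (hS : 0 < ν S) (hgap : ∀ X, U ⊂ X → X ⊂ S → ν X = 0) :
    (S \ U).card ≤ 1 := by
  by_contra hcon
  push_neg at hcon
  obtain ⟨e, heC, f, hfC, hef⟩ := Finset.one_lt_card.mp hcon
  have heS : e ∈ S := (Finset.mem_sdiff.mp heC).1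
  have heU : e ∉ U := (Finset.mem_sdiff.mp heC).2
  have hfS : f ∈ S := (Finset.mem_sdiff.mp hfC).1
  have hfU : f ∉ U := (Finset.mem_sdiff.mp hfC).2
  have hUA : U ⊆ A := hUS.trans hSA
  have hCA : S \ U ⊆ A := (Finset.sdiff_subset).trans hSA
  have hBC : Disjoint U (S \ U) := (Finset.sdiff_disjoint).symm
  have hBCU : U ∪ (S \ U) = S := Finset.union_sdiff_of_subset hUS
  have key := coeffIneq hnn h0 hray hUA hCA hBC heC hfC hef
  simp only [hBCU] at key
  have hW1 : cS A ν (fun X => (e ∈ X ∧ f ∈ X) ∧ U ⊆ X ∧ X ⊆ S) = ν S := by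
    refine cS_eq_single _ (Finset.mem_powerset.mpr hSA)
      ⟨⟨heS, hfS⟩, hUS, le_refl _⟩ ?_
    rintro X hX ⟨⟨heX, _⟩, hUX, hXS⟩ hne
    refine hgap X ?_ (lt_of_le_of_ne hXS hne)
    exact lt_of_le_of_ne hUX (fun h => heU (h ▸ heX))
  have hW2 : cS A ν (fun X => (¬ e ∈ X ∧ ¬ f ∈ X) ∧ U ⊆ X ∧ X ⊆ S) = ν U := by
    refine cS_eq_single _ (Finset.mem_powerset.mpr hUA)
      ⟨⟨heU, hfU⟩, le_refl _, hUS⟩ ?_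
    rintro X hX ⟨⟨heX, _⟩, hUX, hXS⟩ hne
    refine hgap X (lt_of_le_of_ne hUX (Ne.symm hne)) ?_
    exact lt_of_le_of_ne hXS (fun h => heX (h ▸ heS))
  have hW3 : cS A ν (fun X => (e ∈ X ∧ ¬ f ∈ X) ∧ U ⊆ X ∧ X ⊆ S) = 0 := by
    refine cS_eq_zero ?_
    rintro X hX ⟨⟨heX, hfX⟩, hUX, hXS⟩
    refine hgap X (lt_of_le_of_ne hUX (fun h => heU (h ▸ heX))) ?_
    exact lt_of_le_of_ne hXS (fun h => hfX (h ▸ hfS))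
  rw [hW1, hW2, hW3, zero_mul] at key
  nlinarith [key, hU, hS]

/-- support of a Rayleigh measure with `ν ∅ > 0` is downward closed. -/
lemma downClosedAux {A : Finset V} {ν : Finset V → ℝ} (hnn : ∀ S ∈ A.powerset, 0 ≤ ν S)
    (h0 : 0 < ν ∅) (hray : lRayleigh A ν) :
    ∀ (n : ℕ) (S : Finset V), S.card ≤ n → S ⊆ A → 0 < ν S → ∀ e ∈ S, 0 < ν (S.erase e) := by
  intro n
  induction n with
  | zero =>
    intro S hcard _ _ e heS
    rw [Nat.le_zero, Finset.card_eq_zero] at hcard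
    subst hcard
    exact absurd heS (Finset.notMem_empty e)
  | succ n IH =>
    intro S hcard hSA hS e heS
    have hSne : S ≠ ∅ := Finset.ne_empty_of_mem heS
    have hne : (S.powerset.filter (fun X => X ≠ S ∧ 0 < ν X)).Nonempty := by
      refine ⟨∅, Finset.mem_filter.mpr ⟨Finset.mem_powerset.mpr (Finset.empty_subset _),
        fun h => hSne h.symm, h0⟩⟩
    obtain ⟨U, hUmem, hUmax⟩ := Finset.exists_max_image _ Finset.card hne
    have hUS : U ⊆ S := Finset.mem_powerset.mp (Finset.mem_filter.mp hUmem).1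
    have hUneS : U ≠ S := (Finset.mem_filter.mp hUmem).2.1
    have hU : 0 < ν U := (Finset.mem_filter.mp hUmem).2.2
    have hUS' : U ⊂ S := lt_of_le_of_ne hUS hUneS
    have hgap : ∀ X, U ⊂ X → X ⊂ S → ν X = 0 := by
      intro X h1 h2
      have hXA : X ∈ A.powerset := Finset.mem_powerset.mpr (h2.subset.trans hSA)
      rcases eq_or_lt_of_le (hnn X hXA) with h | h
      · exact h.symm
      · exfalso
        have hXmem : X ∈ S.powerset.filter (fun X => X ≠ S ∧ 0 < ν X) :=
          Finset.mem_filter.mpr ⟨Finset.mem_powerset.mpr h2.subset, h2.ne, h⟩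
        exact absurd (hUmax X hXmem) (not_le.mpr (Finset.card_lt_card h1))
    have hcard1 : (S \ U).card ≤ 1 := noGap hnn h0 hray hUS hSA hU hS hgap
    obtain ⟨g, hgS, hgU⟩ := Finset.exists_of_ssubset hUS'
    have hgmem : g ∈ S \ U := Finset.mem_sdiff.mpr ⟨hgS, hgU⟩
    obtain ⟨a, ha⟩ := Finset.card_eq_one.mp
      (le_antisymm hcard1 (Finset.card_pos.mpr ⟨g, hgmem⟩))
    have hU_eq : U = S.erase a := by
      have h1 : S \ (S \ U) = S ∩ U := Finset.sdiff_sdiff_self_left S U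
      have h2 : S ∩ U = U := Finset.inter_eq_right.mpr hUS
      rw [Finset.erase_eq, ← ha, h1, h2]
    have haS : a ∈ S := by
      have : a ∈ S \ U := ha ▸ Finset.mem_singleton_self a
      exact (Finset.mem_sdiff.mp this).1
    by_cases hea : e = a
    · subst hea
      rw [← hU_eq]
      exact hU
    · have heU : e ∈ U := by
        rw [hU_eq]
        exact Finset.mem_erase.mpr ⟨hea, heS⟩
      have hUA : U ⊆ A := hUS.trans hSA
      have hUcard : U.card ≤ n := by
        have := Finset.card_lt_card hUS'
        omega
      have hUe : 0 < ν (U.erase e) := IH U hUcard hUA hU e heU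
      have haU : a ∉ U := by
        rw [hU_eq]
        exact Finset.notMem_erase _ _
      have heT : e ∉ U.erase e := Finset.notMem_erase _ _
      have haT : a ∉ U.erase e := fun h => haU (Finset.erase_subset _ _ h)
      have hins1 : insert e (U.erase e) = U := Finset.insert_erase heU
      have hins2 : insert a U = S := by rw [hU_eq]; exact Finset.insert_erase haS
      have hins3 : insert e (insert a (U.erase e)) = S := by
        rw [Finset.insert_comm, hins1, hins2]
      have hins4 : insert a (U.erase e) = S.erase e := by
        rw [← hins2, Finset.erase_insert_of_ne (Ne.symm hea), hU_eq,
          Finset.erase_right_comm]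
      have hdag := dagger hnn h0 hray (T := U.erase e) (e := e) (f := a)
        (by rw [hins3]; exact hSA) heT haT hea
      rw [hins3, hins1, hins4] at hdag
      have hSe_nn : 0 ≤ ν (S.erase e) :=
        hnn _ (Finset.mem_powerset.mpr ((Finset.erase_subset _ _).trans hSA))
      nlinarith [hdag, hS, hUe, hU, hSe_nn]

lemma downClosed {A : Finset V} {ν : Finset V → ℝ} (hnn : ∀ S ∈ A.powerset, 0 ≤ ν S)
    (h0 : 0 < ν ∅) (hray : lRayleigh A ν) {S : Finset V} (hSA : S ⊆ A) (hS : 0 < ν S)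
    {e : V} (heS : e ∈ S) : 0 < ν (S.erase e) :=
  downClosedAux hnn h0 hray S.card S (le_refl _) hSA hS e heS

end Aux3
section Aux4
variable {V : Type*} [DecidableEq V]

lemma posSet_finite (A : Finset V) (ν : Finset V → ℝ) :
    (ν '' {S : Finset V | S ⊆ A ∧ 0 < ν S}).Finite := by
  refine Set.Finite.image _ (Set.Finite.subset (A.powerset : Finset (Finset V)).finite_toSet ?_)
  intro S hS
  simp only [Finset.coe_powerset, Set.mem_preimage, Set.mem_powerset_iff, Finset.coe_subset]
  exact_mod_cast hS.1

lemma posSet_nonempty {A : Finset V} {ν : Finset V → ℝ} (h0 : 0 < ν ∅) :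
    (ν '' {S : Finset V | S ⊆ A ∧ 0 < ν S}).Nonempty :=
  ⟨ν ∅, ⟨∅, ⟨Finset.empty_subset _, h0⟩, rfl⟩⟩

lemma sInf_posSet_pos {A : Finset V} {ν : Finset V → ℝ} (h0 : 0 < ν ∅) :
    0 < sInf (ν '' {S : Finset V | S ⊆ A ∧ 0 < ν S}) := by
  have hmem := (posSet_nonempty (A := A) h0).csInf_mem (posSet_finite A ν)
  obtain ⟨S, hS, hEq⟩ := hmem
  rw [← hEq]
  exact hS.2

lemma AM_nonneg {A : Finset V} {ν : Finset V → ℝ} (h0 : 0 < ν ∅) : 0 ≤ AM A ν := by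
  have h1 := sInf_posSet_pos (A := A) h0
  have hmem := (posSet_nonempty (A := A) h0).csSup_mem (posSet_finite A ν)
  obtain ⟨S, hS, hEq⟩ := hmem
  have h2 : 0 < sSup (ν '' {S : Finset V | S ⊆ A ∧ 0 < ν S}) := hEq ▸ hS.2
  exact le_of_lt (div_pos h2 h1)

lemma ratioAM {A : Finset V} {ν : Finset V → ℝ} (hnn : ∀ S ∈ A.powerset, 0 ≤ ν S)
    (h0 : 0 < ν ∅) (hray : lRayleigh A ν) {S : Finset V} (hSA : S ⊆ A) {e : V}
    (heS : e ∈ S) : ν S ≤ AM A ν * ν (S.erase e) := by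
  have heA : (S.erase e) ⊆ A := (Finset.erase_subset _ _).trans hSA
  rcases eq_or_lt_of_le (hnn S (Finset.mem_powerset.mpr hSA)) with h | h
  · rw [← h]
    exact mul_nonneg (AM_nonneg h0) (hnn _ (Finset.mem_powerset.mpr heA))
  · have herase : 0 < ν (S.erase e) := downClosed hnn h0 hray hSA h heS
    have h1 : ν S ≤ sSup (ν '' {S : Finset V | S ⊆ A ∧ 0 < ν S}) :=
      le_csSup (posSet_finite A ν).bddAbove ⟨S, ⟨hSA, h⟩, rfl⟩
    have h2 : sInf (ν '' {S : Finset V | S ⊆ A ∧ 0 < ν S}) ≤ ν (S.erase e) :=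
      csInf_le (posSet_finite A ν).bddBelow ⟨S.erase e, ⟨heA, herase⟩, rfl⟩
    have h3 := sInf_posSet_pos (A := A) h0
    calc ν S ≤ sSup (ν '' {S : Finset V | S ⊆ A ∧ 0 < ν S}) := h1
      _ = AM A ν * sInf (ν '' {S : Finset V | S ⊆ A ∧ 0 < ν S}) := by
          rw [AM, div_mul_cancel₀ _ h3.ne']
      _ ≤ AM A ν * ν (S.erase e) := mul_le_mul_of_nonneg_left h2 (AM_nonneg h0)

end Aux4
section Aux5
variable {V : Type*} [DecidableEq V] [Fintype V] (G : SimpleGraph V) [DecidableRel G.Adj]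

lemma nbrsIn_subset (F : Finset (Sym2 V)) (i : V) :
    nbrsIn G F i ⊆ G.neighborFinset i := Finset.filter_subset _ _

lemma gWeight_nonneg {μ : V → Finset V → ℝ}
    (hcm : ∀ i : V, lCavityMonotone (G.neighborFinset i) (μ i)) (F : Finset (Sym2 V)) :
    0 ≤ gWeight G μ F :=
  Finset.prod_nonneg fun i _ =>
    (hcm i).1 _ (Finset.mem_powerset.mpr (nbrsIn_subset G F i))

lemma nbrsIn_empty (i : V) : nbrsIn G (∅ : Finset (Sym2 V)) i = ∅ := by
  rw [nbrsIn]
  exact Finset.filter_false_of_mem fun k _ => Finset.notMem_empty _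

lemma ZG_pos {μ : V → Finset V → ℝ}
    (hcm : ∀ i : V, lCavityMonotone (G.neighborFinset i) (μ i)) {t : ℝ} (ht : 0 < t) :
    0 < ZG G μ t := by
  have hw : 0 < gWeight G μ ∅ * t ^ (∅ : Finset (Sym2 V)).card := by
    rw [gWeight]
    have h1 : 0 < ∏ i : V, μ i (nbrsIn G ∅ i) :=
      Finset.prod_pos fun i _ => by rw [nbrsIn_empty]; exact (hcm i).2.1
    exact mul_pos h1 (pow_pos ht _)
  have hle : gWeight G μ ∅ * t ^ (∅ : Finset (Sym2 V)).card ≤ ZG G μ t := by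
    rw [ZG]
    refine Finset.single_le_sum (f := fun F => gWeight G μ F * t ^ F.card)
      (fun F _ => mul_nonneg (gWeight_nonneg G hcm F) (by positivity)) (by simp)
  linarith

lemma nbrsIn_erase_eq {F : Finset (Sym2 V)} {i j : V} (hij : i ≠ j) :
    nbrsIn G (F.erase s(i, j)) i = (nbrsIn G F i).erase j := by
  ext k
  simp only [nbrsIn, Finset.mem_filter, Finset.mem_erase]
  constructor
  · rintro ⟨hk, hne, hmem⟩
    refine ⟨fun hkj => ?_, hk, hmem⟩
    exact hne (by rw [hkj])
  · rintro ⟨hkj, hk, hmem⟩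
    exact ⟨hk, fun hc => hkj (Sym2.congr_right.mp hc), hmem⟩

lemma nbrsIn_erase_ne {F : Finset (Sym2 V)} {i j v : V} (hvi : v ≠ i) (hvj : v ≠ j) :
    nbrsIn G (F.erase s(i, j)) v = nbrsIn G F v := by
  ext k
  simp only [nbrsIn, Finset.mem_filter, Finset.mem_erase]
  constructor
  · rintro ⟨hk, _, hmem⟩
    exact ⟨hk, hmem⟩
  · rintro ⟨hk, hmem⟩
    refine ⟨hk, fun hc => ?_, hmem⟩
    rcases Sym2.eq_iff.mp hc with ⟨h1, _⟩ | ⟨h1, _⟩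
    · exact hvi h1
    · exact hvj h1

lemma gWeight_erase_le {μ : V → Finset V → ℝ}
    (hcm : ∀ i : V, lCavityMonotone (G.neighborFinset i) (μ i)) {F : Finset (Sym2 V)}
    {i j : V} (hadj : G.Adj i j) (heF : s(i, j) ∈ F) :
    gWeight G μ F ≤ (AM (G.neighborFinset i) (μ i) * AM (G.neighborFinset j) (μ j)) *
      gWeight G μ (F.erase s(i, j)) := by
  have hij : i ≠ j := hadj.ne
  set f := fun v => μ v (nbrsIn G F v) with hf
  set f' := fun v => μ v (nbrsIn G (F.erase s(i, j)) v) with hf'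
  have hiU : i ∈ (Finset.univ : Finset V) := Finset.mem_univ i
  have hjU : j ∈ (Finset.univ : Finset V).erase i :=
    Finset.mem_erase.mpr ⟨hij.symm, Finset.mem_univ j⟩
  have hsplit : ∀ g : V → ℝ, ∏ v : V, g v = g i * (g j * ∏ v ∈ (Finset.univ.erase i).erase j, g v) := by
    intro g
    rw [Finset.mul_prod_erase _ g hjU, Finset.mul_prod_erase _ g hiU]
  have hrest : ∀ v ∈ (Finset.univ.erase i).erase j, f' v = f v := by
    intro v hv
    have hvj : v ≠ j := (Finset.mem_erase.mp hv).1
    have hvi : v ≠ i := (Finset.mem_erase.mp (Finset.mem_erase.mp hv).2).1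
    show μ v (nbrsIn G (F.erase s(i, j)) v) = μ v (nbrsIn G F v)
    rw [nbrsIn_erase_ne G hvi hvj]
  have hrw : gWeight G μ F = f i * (f j * ∏ v ∈ (Finset.univ.erase i).erase j, f v) := by
    rw [gWeight, hsplit f]
  have hrw' : gWeight G μ (F.erase s(i, j))
      = f' i * (f' j * ∏ v ∈ (Finset.univ.erase i).erase j, f v) := by
    rw [gWeight, hsplit f']
    congr 1
    congr 1
    exact Finset.prod_congr rfl hrest
  -- local ratio facts
  have hjN : j ∈ nbrsIn G F i := by
    rw [nbrsIn, Finset.mem_filter, SimpleGraph.mem_neighborFinset]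
    exact ⟨hadj, heF⟩
  have hiN : i ∈ nbrsIn G F j := by
    rw [nbrsIn, Finset.mem_filter, SimpleGraph.mem_neighborFinset]
    exact ⟨hadj.symm, Sym2.eq_swap ▸ heF⟩
  have hi1 : f i ≤ AM (G.neighborFinset i) (μ i) * f' i := by
    show μ i (nbrsIn G F i) ≤ AM (G.neighborFinset i) (μ i) * μ i (nbrsIn G (F.erase s(i, j)) i)
    rw [nbrsIn_erase_eq G hij]
    exact ratioAM (hcm i).1 (hcm i).2.1 (hcm i).2.2.1 (nbrsIn_subset G F i) hjN
  have hj1 : f j ≤ AM (G.neighborFinset j) (μ j) * f' j := by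
    have : nbrsIn G (F.erase s(i, j)) j = (nbrsIn G F j).erase i := by
      rw [show s(i, j) = s(j, i) from Sym2.eq_swap]
      exact nbrsIn_erase_eq G hij.symm
    show μ j (nbrsIn G F j) ≤ AM (G.neighborFinset j) (μ j) * μ j (nbrsIn G (F.erase s(i, j)) j)
    rw [this]
    exact ratioAM (hcm j).1 (hcm j).2.1 (hcm j).2.2.1 (nbrsIn_subset G F j) hiN
  have hnn : ∀ v (F₀ : Finset (Sym2 V)), 0 ≤ μ v (nbrsIn G F₀ v) := fun v F₀ =>
    (hcm v).1 _ (Finset.mem_powerset.mpr (nbrsIn_subset G F₀ v))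
  have hrestnn : 0 ≤ ∏ v ∈ (Finset.univ.erase i).erase j, f v :=
    Finset.prod_nonneg fun v _ => hnn v F
  have hAMi := AM_nonneg (A := G.neighborFinset i) (hcm i).2.1
  have hAMj := AM_nonneg (A := G.neighborFinset j) (hcm j).2.1
  rw [hrw, hrw']
  set r := ∏ v ∈ (Finset.univ.erase i).erase j, f v
  calc f i * (f j * r) ≤ (AM (G.neighborFinset i) (μ i) * f' i) * (f j * r) := by
        refine mul_le_mul_of_nonneg_right hi1 (mul_nonneg (hnn j F) hrestnn)
    _ ≤ (AM (G.neighborFinset i) (μ i) * f' i) *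
        ((AM (G.neighborFinset j) (μ j) * f' j) * r) := by
        refine mul_le_mul_of_nonneg_left
          (mul_le_mul_of_nonneg_right hj1 hrestnn)
          (mul_nonneg hAMi (hnn i (F.erase s(i, j))))
    _ = (AM (G.neighborFinset i) (μ i) * AM (G.neighborFinset j) (μ j)) *
        (f' i * (f' j * r)) := by ring

lemma edgeBound {μ : V → Finset V → ℝ}
    (hcm : ∀ i : V, lCavityMonotone (G.neighborFinset i) (μ i)) {t : ℝ} (ht : 0 < t)
    {i j : V} (hadj : G.Adj i j) :
    ∑ F ∈ G.edgeFinset.powerset.filter (fun F => s(i, j) ∈ F), gWeight G μ F * t ^ F.card ≤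
      t * (AM (G.neighborFinset i) (μ i) * AM (G.neighborFinset j) (μ j)) * ZG G μ t := by
  set AA := AM (G.neighborFinset i) (μ i) * AM (G.neighborFinset j) (μ j) with hAA
  have hAAnn : 0 ≤ AA :=
    mul_nonneg (AM_nonneg (hcm i).2.1) (AM_nonneg (hcm j).2.1)
  have heE : s(i, j) ∈ G.edgeFinset := by
    rw [SimpleGraph.mem_edgeFinset, SimpleGraph.mem_edgeSet]
    exact hadj
  have step1 : ∑ F ∈ G.edgeFinset.powerset.filter (fun F => s(i, j) ∈ F),
      gWeight G μ F * t ^ F.card ≤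
      ∑ F ∈ G.edgeFinset.powerset.filter (fun F => s(i, j) ∈ F),
      (t * AA) * (gWeight G μ (F.erase s(i, j)) * t ^ (F.erase s(i, j)).card) := by
    refine Finset.sum_le_sum fun F hF => ?_
    have heF : s(i, j) ∈ F := (Finset.mem_filter.mp hF).2
    have hcard : (F.erase s(i, j)).card + 1 = F.card := Finset.card_erase_add_one heF
    have h1 : gWeight G μ F ≤ AA * gWeight G μ (F.erase s(i, j)) :=
      gWeight_erase_le G hcm hadj heF
    have h2 : t ^ F.card = t * t ^ (F.erase s(i, j)).card := by
      rw [← hcard, pow_succ]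
      ring
    rw [h2]
    calc gWeight G μ F * (t * t ^ (F.erase s(i, j)).card)
        ≤ (AA * gWeight G μ (F.erase s(i, j))) * (t * t ^ (F.erase s(i, j)).card) := by
          refine mul_le_mul_of_nonneg_right h1 (by positivity)
      _ = (t * AA) * (gWeight G μ (F.erase s(i, j)) * t ^ (F.erase s(i, j)).card) := by ring
  have step2 : ∑ F ∈ G.edgeFinset.powerset.filter (fun F => s(i, j) ∈ F),
      gWeight G μ (F.erase s(i, j)) * t ^ (F.erase s(i, j)).card =
      ∑ F ∈ G.edgeFinset.powerset.filter (fun F => ¬ s(i, j) ∈ F),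
      gWeight G μ F * t ^ F.card := by
    refine Finset.sum_bij' (fun F _ => F.erase s(i, j)) (fun F _ => insert s(i, j) F)
      ?_ ?_ ?_ ?_ ?_
    · intro F hF
      rw [Finset.mem_filter] at hF ⊢
      exact ⟨Finset.mem_powerset.mpr ((Finset.erase_subset _ _).trans
        (Finset.mem_powerset.mp hF.1)), Finset.notMem_erase _ _⟩
    · intro F hF
      rw [Finset.mem_filter] at hF ⊢
      exact ⟨Finset.mem_powerset.mpr (Finset.insert_subset heE (Finset.mem_powerset.mp hF.1)),
        Finset.mem_insert_self _ _⟩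
    · intro F hF
      exact Finset.insert_erase (Finset.mem_filter.mp hF).2
    · intro F hF
      exact Finset.erase_insert (Finset.mem_filter.mp hF).2
    · intro F hF
      rfl
  have step3 : ∑ F ∈ G.edgeFinset.powerset.filter (fun F => ¬ s(i, j) ∈ F),
      gWeight G μ F * t ^ F.card ≤ ZG G μ t := by
    rw [ZG]
    refine Finset.sum_le_sum_of_subset_of_nonneg (Finset.filter_subset _ _) fun F _ _ =>
      mul_nonneg (gWeight_nonneg G hcm F) (by positivity)
  calc ∑ F ∈ G.edgeFinset.powerset.filter (fun F => s(i, j) ∈ F), gWeight G μ F * t ^ F.card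
      ≤ ∑ F ∈ G.edgeFinset.powerset.filter (fun F => s(i, j) ∈ F),
        (t * AA) * (gWeight G μ (F.erase s(i, j)) * t ^ (F.erase s(i, j)).card) := step1
    _ = (t * AA) * ∑ F ∈ G.edgeFinset.powerset.filter (fun F => s(i, j) ∈ F),
        gWeight G μ (F.erase s(i, j)) * t ^ (F.erase s(i, j)).card := by
        rw [Finset.mul_sum]
    _ = (t * AA) * ∑ F ∈ G.edgeFinset.powerset.filter (fun F => ¬ s(i, j) ∈ F),
        gWeight G μ F * t ^ F.card := by rw [step2]
    _ ≤ (t * AA) * ZG G μ t := by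
        refine mul_le_mul_of_nonneg_left step3 (by positivity)
    _ = t * AA * ZG G μ t := rfl

end Aux5
/-- on a finite cavity-monotone network,
`U(G;t) ≤ t Σ_{ij∈E} A(μ_i)A(μ_j)` for every `t > 0`. -/
theorem stmt14 {V : Type*} [Fintype V] [DecidableEq V] (G : SimpleGraph V)
    [DecidableRel G.Adj] (μ : V → Finset V → ℝ)
    (hcm : ∀ i : V, lCavityMonotone (G.neighborFinset i) (μ i))
    (t : ℝ) (ht : 0 < t) :
    UG G μ t ≤ t * ∑ e ∈ G.edgeFinset,
      Sym2.lift ⟨fun i j => AM (G.neighborFinset i) (μ i) * AM (G.neighborFinset j) (μ j),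
        fun _ _ => mul_comm _ _⟩ e := by
  have hZ : 0 < ZG G μ t := ZG_pos G hcm ht
  rw [UG, div_le_iff₀ hZ]
  set AAe : Sym2 V → ℝ := Sym2.lift ⟨fun i j => AM (G.neighborFinset i) (μ i) *
    AM (G.neighborFinset j) (μ j), fun _ _ => mul_comm _ _⟩ with hAAe
  have hnum : ∑ F ∈ G.edgeFinset.powerset, (F.card : ℝ) * gWeight G μ F * t ^ F.card
      = ∑ e ∈ G.edgeFinset, ∑ F ∈ G.edgeFinset.powerset.filter (fun F => e ∈ F),
        gWeight G μ F * t ^ F.card := by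
    have h1 : ∀ F ∈ G.edgeFinset.powerset,
        (F.card : ℝ) * gWeight G μ F * t ^ F.card
          = ∑ _e ∈ F, gWeight G μ F * t ^ F.card := by
      intro F _
      rw [Finset.sum_const, nsmul_eq_mul]
      ring
    rw [Finset.sum_congr rfl h1]
    refine Finset.sum_comm' fun F e => ?_
    constructor
    · rintro ⟨hF, heF⟩
      exact ⟨Finset.mem_filter.mpr ⟨hF, heF⟩, Finset.mem_powerset.mp hF heF⟩
    · rintro ⟨hF, _⟩
      exact ⟨(Finset.mem_filter.mp hF).1, (Finset.mem_filter.mp hF).2⟩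
  have hedge : ∀ e ∈ G.edgeFinset,
      ∑ F ∈ G.edgeFinset.powerset.filter (fun F => e ∈ F), gWeight G μ F * t ^ F.card
        ≤ t * AAe e * ZG G μ t := by
    intro e
    refine Sym2.inductionOn e fun i j => ?_
    intro hij
    have hadj : G.Adj i j := by
      rwa [SimpleGraph.mem_edgeFinset, SimpleGraph.mem_edgeSet] at hij
    have h := edgeBound G hcm ht hadj
    have hlift : AAe s(i, j) = AM (G.neighborFinset i) (μ i) * AM (G.neighborFinset j) (μ j) := by
      rw [hAAe, Sym2.lift_mk]
    rw [hlift]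
    exact h
  calc ∑ F ∈ G.edgeFinset.powerset, (F.card : ℝ) * gWeight G μ F * t ^ F.card
      = ∑ e ∈ G.edgeFinset, ∑ F ∈ G.edgeFinset.powerset.filter (fun F => e ∈ F),
        gWeight G μ F * t ^ F.card := hnum
    _ ≤ ∑ e ∈ G.edgeFinset, t * AAe e * ZG G μ t := Finset.sum_le_sum hedge
    _ = t * (∑ e ∈ G.edgeFinset, AAe e) * ZG G μ t := by
        rw [← Finset.sum_mul, ← Finset.mul_sum]
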